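/- Let $F$ be a linear isometry of a norm $\|\cdot\|_X$ on $\mathbb{R}^n$ all of whose eigenvalues are real, and $F\neq\pm\operatorname{Id}$. Then $\|F+\operatorname{Id}\|_X=\|F-\operatorname{Id}\|_X=2$ (operator norms with respect to $\|\cdot\|_X$). -/

import Mathlib

open scoped Real

def IsQuasinorm {E : Type*} [AddCommGroup E] [Module ℝ E] (q : E → ℝ) : Prop :=
  (∀ x, 0 ≤ q x) ∧ (∀ x, q x = 0 ↔ x = 0) ∧
  (∀ (c : ℝ) (x : E), q (c • x) = |c| * q x) ∧
  ∃ k : ℝ, 0 < k ∧ ∀ x y, q (x + y) ≤ k * (q x + q y)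

def IsNormFn {E : Type*} [AddCommGroup E] [Module ℝ E] (q : E → ℝ) : Prop :=
  (∀ x, 0 ≤ q x) ∧ (∀ x, q x = 0 ↔ x = 0) ∧
  (∀ (c : ℝ) (x : E), q (c • x) = |c| * q x) ∧
  ∀ x y, q (x + y) ≤ q x + q y

def distSet {E : Type*} [AddCommGroup E] [Module ℝ E] (q r : E → ℝ) : Set ℝ :=
  {μ : ℝ | 1 ≤ μ ∧ ∃ l : ℝ, 0 < l ∧ ∀ x, q x ≤ l * r x ∧ l * r x ≤ μ * q x}

noncomputable def multDist {E : Type*} [AddCommGroup E] [Module ℝ E] (q r : E → ℝ) : ℝ :=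
  sInf (distSet q r)

open Polynomial Matrix in
lemma my_eval_charpoly {K : Type*} [Field K] {m : Type*} [Fintype m] [DecidableEq m]
    (M : Matrix m m K) (r : K) :
    M.charpoly.eval r = (Matrix.scalar m r - M).det := by
  rw [Matrix.charpoly, eval_det, matPolyEquiv_charmatrix]
  simp

open Polynomial Matrix in
lemma my_root_mem_spectrum {K : Type*} [Field K] {m : Type*} [Fintype m] [DecidableEq m]
    (M : Matrix m m K) (r : K) (h : M.charpoly.eval r = 0) : r ∈ spectrum K M := by
  rw [spectrum.mem_iff]
  intro hU
  rw [my_eval_charpoly] at h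
  have h2 : algebraMap K (Matrix m m K) r = Matrix.scalar m r := by
    rw [Matrix.algebraMap_eq_diagonal, Matrix.scalar_apply]
    rfl
  rw [h2, Matrix.isUnit_iff_isUnit_det, h] at hU
  exact (not_isUnit_zero : ¬ IsUnit (0 : K)) hU

open Polynomial Matrix in
lemma aux_sq_eq_one {n : ℕ} (hn : 0 < n) (A : Matrix (Fin n) (Fin n) ℝ)
    (q : (Fin n → ℝ) → ℝ) (hq : IsNormFn q) (hiso : ∀ x, q (A.mulVec x) = q x)
    (hreal : ∀ μ ∈ spectrum ℂ (A.map (algebraMap ℝ ℂ)), μ.im = 0) :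
    A * A = 1 := by
  obtain ⟨hpos, hzero, hsmul, htri⟩ := hq
  have hqneg : ∀ x, q (-x) = q x := by
    intro x
    have := hsmul (-1) x
    simpa using this
  -- Step 1: real roots of charpoly are ±1
  have hroot : ∀ r : ℝ, A.charpoly.eval r = 0 → r = 1 ∨ r = -1 := by
    intro r hr
    rw [my_eval_charpoly] at hr
    obtain ⟨v, hv0, hv⟩ := (Matrix.exists_mulVec_eq_zero_iff).2 hr
    rw [Matrix.sub_mulVec, sub_eq_zero] at hv
    have hscal : (Matrix.scalar (Fin n) r).mulVec v = r • v := by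
      ext i
      rw [Matrix.scalar_apply, Matrix.mulVec_diagonal]
      simp
    have hAv : A.mulVec v = r • v := by rw [← hv, hscal]
    have h2 : q (A.mulVec v) = |r| * q v := by rw [hAv, hsmul]
    rw [hiso] at h2
    have hqv : q v ≠ 0 := fun h => hv0 ((hzero v).1 h)
    have habs : |r| = 1 := by
      have : (1 : ℝ) * q v = |r| * q v := by rw [one_mul]; exact h2
      exact (mul_right_cancel₀ hqv this).symm
    exact (abs_eq (by norm_num : (0:ℝ) ≤ 1)).1 habs
  set M := A.map (algebraMap ℝ ℂ) with hM
  -- Step 2: complex roots are ±1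
  have hcroot : ∀ z ∈ M.charpoly.roots, z = 1 ∨ z = -1 := by
    intro z hz
    have hz0 : M.charpoly.eval z = 0 := (Polynomial.isRoot_of_mem_roots hz)
    have hzs : z ∈ spectrum ℂ M := my_root_mem_spectrum _ _ hz0
    have him := hreal z hzs
    have hzre : ((z.re : ℂ)) = z := Complex.ext rfl (by simp [him])
    have hre0 : A.charpoly.eval z.re = 0 := by
      have hcm : M.charpoly = (A.charpoly).map (algebraMap ℝ ℂ) := Matrix.charpoly_map A _
      rw [hcm, ← hzre] at hz0
      rw [Polynomial.eval_map,
        show ((z.re : ℂ)) = algebraMap ℝ ℂ z.re from rfl,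
        Polynomial.eval₂_at_apply] at hz0
      rwa [show (algebraMap ℝ ℂ) (eval z.re A.charpoly) = ((eval z.re A.charpoly : ℝ) : ℂ)
        from rfl, Complex.ofReal_eq_zero] at hz0
    rcases hroot z.re hre0 with h | h
    · left; rw [← hzre, h]; norm_num
    · right; rw [← hzre, h]; norm_num
  -- Step 3: charpoly divides (X^2-1)^n, so (M^2-1)^n = 0
  have hmonic : M.charpoly.Monic := Matrix.charpoly_monic M
  have hdeg : M.charpoly.natDegree = n := by
    rw [Matrix.charpoly_natDegree_eq_dim, Fintype.card_fin]
  have hsplits : Splits M.charpoly := IsAlgClosed.splits _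
  have hcard : Multiset.card M.charpoly.roots = n := by
    have := Polynomial.splits_iff_card_roots.1 hsplits
    rw [hdeg] at this
    exact this
  have hfact : M.charpoly = (M.charpoly.roots.map fun r => X - C r).prod :=
    hsplits.eq_prod_roots_of_monic hmonic
  have hdvd : M.charpoly ∣ (X ^ 2 - 1 : ℂ[X]) ^ n := by
    have hd : ∀ r ∈ M.charpoly.roots, (X - C r) ∣ ((X : ℂ[X]) ^ 2 - 1) := by
      intro r hr
      rcases hcroot r hr with h | h
      · subst h; exact ⟨X + 1, by rw [Polynomial.C_1]; ring⟩
      · subst h; exact ⟨X - 1, by rw [map_neg, Polynomial.C_1]; ring⟩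
    have := Multiset.prod_dvd_prod_of_dvd (S := M.charpoly.roots)
      (fun r => X - C r) (fun _ => (X : ℂ[X]) ^ 2 - 1) hd
    rw [Multiset.map_const', Multiset.prod_replicate, hcard] at this
    rw [hfact]
    exact this
  have hMnil : (M ^ 2 - 1) ^ n = 0 := by
    obtain ⟨g, hg⟩ := hdvd
    have hCH := Matrix.aeval_self_charpoly M
    have h0 : aeval M ((X ^ 2 - 1 : ℂ[X]) ^ n) = 0 := by
      rw [hg, _root_.map_mul, hCH, zero_mul]
    simpa using h0
  -- Step 4: transfer back to ℝ
  have hnil : (A * A - 1) ^ n = 0 := by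
    have hφ : ((algebraMap ℝ ℂ).mapMatrix : Matrix (Fin n) (Fin n) ℝ →+* _)
        ((A * A - 1) ^ n) = (M ^ 2 - 1) ^ n := by
      rw [map_pow, map_sub, _root_.map_mul, _root_.map_one, RingHom.mapMatrix_apply, ← hM, sq]
    rw [hMnil] at hφ
    ext i j
    have h2 := congrFun (congrFun hφ i) j
    simp only [RingHom.mapMatrix_apply, Matrix.map_apply, Matrix.zero_apply] at h2
    simp only [Matrix.zero_apply]
    rwa [show (algebraMap ℝ ℂ) (((A * A - 1) ^ n) i j) = ((((A * A - 1) ^ n) i j : ℝ) : ℂ)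
      from rfl, Complex.ofReal_eq_zero] at h2
  -- Step 5: nilpotent part vanishes by isometry
  rw [← sub_eq_zero]
  by_contra hB0
  have hex : ∃ k, (A * A - 1) ^ k = 0 := ⟨n, hnil⟩
  obtain ⟨k0, hk0, hkmin⟩ : ∃ k0, (A * A - 1) ^ k0 = 0 ∧ ∀ m, m < k0 → (A * A - 1) ^ m ≠ 0 :=
    ⟨Nat.find hex, Nat.find_spec hex, fun m hm => Nat.find_min hex hm⟩
  have hk1 : 1 < k0 := by
    rcases Nat.lt_or_ge 1 k0 with h | h
    · exact h
    · exfalso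
      interval_cases k0
      · rw [pow_zero] at hk0
        have := congrFun (congrFun hk0 ⟨0, hn⟩) ⟨0, hn⟩
        simp at this
      · rw [pow_one] at hk0
        exact hB0 hk0
  have hBj : (A * A - 1) ^ (k0 - 1) ≠ 0 := hkmin _ (by omega)
  have hw0 : ∃ w0, ((A * A - 1) ^ (k0 - 1)).mulVec w0 ≠ 0 := by
    by_contra h
    push_neg at h
    apply hBj
    ext i l
    have := congrFun (h (Pi.single l 1)) i
    rw [Matrix.mulVec_single] at this
    simpa using this
  obtain ⟨w0, hw0⟩ := hw0
  obtain ⟨v, w, hBv, hBw, hwne⟩ : ∃ v w, (A * A - 1).mulVec v = w ∧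
      (A * A - 1).mulVec w = 0 ∧ w ≠ 0 := by
    refine ⟨((A * A - 1) ^ (k0 - 2)).mulVec w0, ((A * A - 1) ^ (k0 - 1)).mulVec w0,
      ?_, ?_, hw0⟩
    · have he : (A * A - 1) * (A * A - 1) ^ (k0 - 2) = (A * A - 1) ^ (k0 - 1) := by
        rw [← pow_succ']
        congr 1
        omega
      rw [Matrix.mulVec_mulVec, he]
    · rw [Matrix.mulVec_mulVec, ← pow_succ']
      rw [show k0 - 1 + 1 = k0 from by omega, hk0, Matrix.zero_mulVec]
  have hCv : (A * A).mulVec v = v + w := by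
    have : A * A = (A * A - 1) + 1 := by abel
    rw [this, Matrix.add_mulVec, Matrix.one_mulVec, hBv, add_comm]
  have hCw : (A * A).mulVec w = w := by
    have : A * A = (A * A - 1) + 1 := by abel
    rw [this, Matrix.add_mulVec, Matrix.one_mulVec, hBw, zero_add]
  have hCk : ∀ k : ℕ, ((A * A) ^ k).mulVec v = v + (k : ℝ) • w := by
    intro k
    induction k with
    | zero => simp [Matrix.one_mulVec]
    | succ k ih =>
      rw [pow_succ', ← Matrix.mulVec_mulVec, ih, Matrix.mulVec_add, hCv,
        Matrix.mulVec_smul, hCw]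
      push_cast
      rw [add_smul, one_smul]
      abel
  have hCkiso : ∀ (k : ℕ) x, q (((A * A) ^ k).mulVec x) = q x := by
    intro k
    induction k with
    | zero => intro x; simp [Matrix.one_mulVec]
    | succ k ih =>
      intro x
      rw [pow_succ, ← Matrix.mulVec_mulVec, ih, ← Matrix.mulVec_mulVec, hiso, hiso]
  have hqw : 0 < q w := by
    rcases lt_or_eq_of_le (hpos w) with h | h
    · exact h
    · exact absurd ((hzero w).1 h.symm) hwne
  obtain ⟨k, hk⟩ := exists_nat_gt ((2 * q v) / q w)
  have hkw : 2 * q v < (k : ℝ) * q w := (div_lt_iff₀ hqw).1 hk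
  have h1 : q (v + (k : ℝ) • w) = q v := by
    rw [← hCk k, hCkiso]
  have h2 : (k : ℝ) * q w - q v ≤ q (v + (k : ℝ) • w) := by
    have := htri (v + (k : ℝ) • w) (-v)
    have he : v + (k : ℝ) • w + (-v) = (k : ℝ) • w := by abel
    rw [he, hqneg, hsmul] at this
    rw [abs_of_nonneg (Nat.cast_nonneg k)] at this
    linarith
  rw [h1] at h2
  linarith

open Matrix in
lemma sup_helper {n : ℕ} (q : (Fin n → ℝ) → ℝ) (hq : IsNormFn q)
    (B : Matrix (Fin n) (Fin n) ℝ)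
    (hub : ∀ x, q (B.mulVec x) ≤ 2 * q x) (u : Fin n → ℝ) (hu : u ≠ 0)
    (hV : q (B.mulVec u) = 2 * q u) :
    sSup ((fun x => q (B.mulVec x)) '' {x | q x ≤ 1}) = 2 := by
  obtain ⟨hpos, hzero, hsmul, _⟩ := hq
  have hqu : 0 < q u := by
    rcases lt_or_eq_of_le (hpos u) with h | h
    · exact h
    · exact absurd ((hzero u).1 h.symm) hu
  have hx0 : q ((q u)⁻¹ • u) = 1 := by
    rw [hsmul, abs_of_pos (inv_pos.2 hqu)]
    field_simp
  have hmem : (2 : ℝ) ∈ ((fun x => q (B.mulVec x)) '' {x | q x ≤ 1}) := by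
    refine ⟨(q u)⁻¹ • u, by simp [hx0], ?_⟩
    show q (B.mulVec ((q u)⁻¹ • u)) = 2
    rw [Matrix.mulVec_smul, hsmul, abs_of_pos (inv_pos.2 hqu), hV]
    field_simp
  have hbdd : ∀ y ∈ ((fun x => q (B.mulVec x)) '' {x | q x ≤ 1}), y ≤ 2 := by
    rintro y ⟨x, hx, rfl⟩
    calc q (B.mulVec x) ≤ 2 * q x := hub x
    _ ≤ 2 * 1 := by have : q x ≤ 1 := hx; linarith
    _ = 2 := by norm_num
  exact le_antisymm (csSup_le ⟨2, hmem⟩ hbdd) (le_csSup ⟨2, fun y hy => hbdd y hy⟩ hmem)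

/-- For an isometry ≠ ±Id with all eigenvalues real, ‖F+Id‖ = ‖F-Id‖ = 2. -/
theorem stmt15 {n : ℕ} (A : Matrix (Fin n) (Fin n) ℝ) (q : (Fin n → ℝ) → ℝ)
    (hq : IsNormFn q) (hiso : ∀ x, q (A.mulVec x) = q x)
    (hA : A ≠ 1 ∧ A ≠ -1)
    (hreal : ∀ μ ∈ spectrum ℂ (A.map (algebraMap ℝ ℂ)), μ.im = 0) :
    sSup ((fun x => q ((A + 1).mulVec x)) '' {x | q x ≤ 1}) = 2 ∧
    sSup ((fun x => q ((A - 1).mulVec x)) '' {x | q x ≤ 1}) = 2 := by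
  rcases Nat.eq_zero_or_pos n with hn | hn
  · subst hn
    exact absurd (Matrix.ext fun i _ => absurd i.2 (Nat.not_lt_zero _)) hA.1
  obtain ⟨hpos, hzero, hsmul, htri⟩ := hq
  have hqneg : ∀ x, q (-x) = q x := by
    intro x
    have := hsmul (-1) x
    simpa using this
  have hsq : A * A = 1 := aux_sq_eq_one hn A q ⟨hpos, hzero, hsmul, htri⟩ hiso hreal
  -- upper bounds
  have hub1 : ∀ x, q ((A + 1).mulVec x) ≤ 2 * q x := by
    intro x
    rw [Matrix.add_mulVec, Matrix.one_mulVec]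
    calc q (A.mulVec x + x) ≤ q (A.mulVec x) + q x := htri _ _
    _ = 2 * q x := by rw [hiso]; ring
  have hub2 : ∀ x, q ((A - 1).mulVec x) ≤ 2 * q x := by
    intro x
    rw [Matrix.sub_mulVec, Matrix.one_mulVec, sub_eq_add_neg]
    calc q (A.mulVec x + (-x)) ≤ q (A.mulVec x) + q (-x) := htri _ _
    _ = 2 * q x := by rw [hiso, hqneg]; ring
  -- eigenvector for +1
  have hplus : ∃ u, u ≠ 0 ∧ A.mulVec u = u := by
    by_contra h
    push_neg at h
    apply hA.2
    ext i l
    have hvl : A.mulVec (Pi.single l 1) + (Pi.single l 1) = 0 := by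
      by_contra h2
      refine h _ h2 ?_
      rw [Matrix.mulVec_add, Matrix.mulVec_mulVec, hsq, Matrix.one_mulVec]
      abel
    have := congrFun hvl i
    rw [Matrix.mulVec_single] at this
    simp only [Pi.add_apply, Pi.zero_apply, mul_one, Pi.smul_apply, Matrix.col_apply,
      MulOpposite.op_one, one_smul] at this
    have h1 : A i l = -((Pi.single l 1 : Fin n → ℝ) i) := by linarith
    rw [h1]
    by_cases hil : i = l <;>
      simp [Matrix.neg_apply, Matrix.one_apply, Pi.single_apply, hil]
  have hminus : ∃ u, u ≠ 0 ∧ A.mulVec u = -u := by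
    by_contra h
    push_neg at h
    apply hA.1
    ext i l
    have hvl : A.mulVec (Pi.single l 1) - (Pi.single l 1) = 0 := by
      by_contra h2
      refine h _ h2 ?_
      rw [Matrix.mulVec_sub, Matrix.mulVec_mulVec, hsq, Matrix.one_mulVec]
      abel
    have := congrFun hvl i
    rw [Matrix.mulVec_single] at this
    simp only [Pi.sub_apply, Pi.zero_apply, mul_one, Pi.smul_apply, Matrix.col_apply,
      MulOpposite.op_one, one_smul] at this
    have h1 : A i l = (Pi.single l 1 : Fin n → ℝ) i := by linarith
    rw [h1]
    by_cases hil : i = l <;>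
      simp [Matrix.one_apply, Pi.single_apply, hil]
  obtain ⟨up, hup, hAup⟩ := hplus
  obtain ⟨um, hum, hAum⟩ := hminus
  constructor
  · apply sup_helper q ⟨hpos, hzero, hsmul, htri⟩ _ hub1 up hup
    rw [Matrix.add_mulVec, Matrix.one_mulVec, hAup]
    have h2 : up + up = (2 : ℝ) • up := by
      rw [two_smul]
    rw [h2, hsmul]
    norm_num
  · apply sup_helper q ⟨hpos, hzero, hsmul, htri⟩ _ hub2 um hum
    rw [Matrix.sub_mulVec, Matrix.one_mulVec, hAum]
    have h2 : -um - um = (-2 : ℝ) • um := by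
      rw [neg_smul, two_smul, neg_add]
      abel
    rw [h2, hsmul]
    norm_num
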